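/- arXiv:1902.00618 — 2 statements merged into one kernel-verified Lean document; each statement's English description precedes it below -/
import Mathlib

section
/- Let Y ⊂ ℝ^{d₂} be a nonempty compact set and let f: ℝ^{d₁} × Y → ℝ be ℓ-gradient-Lipschitz (its gradient is ℓ-Lipschitz). Then the function φ(x) := max_{y ∈ Y} f(x,y) is ℓ-weakly convex: the function x ↦ φ(x) + (ℓ/2)‖x‖² is convex on ℝ^{d₁}. -/
open Metric Set

noncomputable section

lemma line_convex {d₁ d₂ : ℕ}
    (Y : Set (EuclideanSpace ℝ (Fin d₂)))
    (f : EuclideanSpace ℝ (Fin d₁) × EuclideanSpace ℝ (Fin d₂) → ℝ) (ℓ : ℝ)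
    (hdiff : Differentiable ℝ f)
    (hgrad : ∀ z z' : EuclideanSpace ℝ (Fin d₁) × EuclideanSpace ℝ (Fin d₂),
      z.2 ∈ Y → z'.2 ∈ Y → ‖fderiv ℝ f z - fderiv ℝ f z'‖ ≤ ℓ * ‖z - z'‖)
    (y : EuclideanSpace ℝ (Fin d₂)) (hy : y ∈ Y)
    (x v : EuclideanSpace ℝ (Fin d₁)) :
    ConvexOn ℝ Set.univ
      (fun t : ℝ => f (x + t • v, y) + (ℓ / 2) * ‖x + t • v‖ ^ 2) := by
  set g : ℝ → ℝ := fun t => f (x + t • v, y) + (ℓ / 2) * ‖x + t • v‖ ^ 2 with hg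
  set g' : ℝ → ℝ := fun t =>
    fderiv ℝ f (x + t • v, y) (v, (0 : EuclideanSpace ℝ (Fin d₂)))
      + (ℓ * inner ℝ x v + ℓ * t * ‖v‖ ^ 2) with hg'
  have hγ : ∀ t : ℝ, HasDerivAt (fun t : ℝ => x + t • v) v t := by
    intro t
    simpa using ((hasDerivAt_id t).smul_const v).const_add x
  have hquad : ∀ t : ℝ, (ℓ / 2) * ‖x + t • v‖ ^ 2
      = (ℓ / 2) * ‖x‖ ^ 2 + ℓ * t * inner ℝ x v + (ℓ / 2) * t ^ 2 * ‖v‖ ^ 2 := by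
    intro t
    have h1 : ‖x + t • v‖ ^ 2 = ‖x‖ ^ 2 + 2 * inner ℝ x (t • v) + ‖t • v‖ ^ 2 :=
      norm_add_sq_real x (t • v)
    have h2 : (inner ℝ x (t • v) : ℝ) = t * inner ℝ x v := real_inner_smul_right x v t
    have h3 : ‖t • v‖ ^ 2 = t ^ 2 * ‖v‖ ^ 2 := by
      rw [norm_smul]; simp [mul_pow, sq_abs]
    rw [h1, h2, h3]; ring
  have hgeq : g = fun t : ℝ => f (x + t • v, y)
      + ((ℓ / 2) * ‖x‖ ^ 2 + ℓ * t * inner ℝ x v + (ℓ / 2) * t ^ 2 * ‖v‖ ^ 2) := by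
    funext t; simp only [hg]; rw [hquad t]
  have hd : ∀ t : ℝ, HasDerivAt g (g' t) t := by
    intro t
    have hF : HasDerivAt (fun t : ℝ => f (x + t • v, y))
        (fderiv ℝ f (x + t • v, y) (v, (0 : EuclideanSpace ℝ (Fin d₂)))) t := by
      have hpair : HasDerivAt (fun t : ℝ => ((x + t • v, y) :
          EuclideanSpace ℝ (Fin d₁) × EuclideanSpace ℝ (Fin d₂)))
          ((v, (0 : EuclideanSpace ℝ (Fin d₂)))) t :=
        (hγ t).prodMk (hasDerivAt_const t y)
      exact ((hdiff (x + t • v, y)).hasFDerivAt).comp_hasDerivAt t hpair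
    have hQ : HasDerivAt (fun t : ℝ => (ℓ / 2) * ‖x‖ ^ 2 + ℓ * t * inner ℝ x v
        + (ℓ / 2) * t ^ 2 * ‖v‖ ^ 2) (ℓ * inner ℝ x v + ℓ * t * ‖v‖ ^ 2) t := by
      have h1 : HasDerivAt (fun t : ℝ => ℓ * t * inner ℝ x v) (ℓ * inner ℝ x v) t := by
        simpa [mul_comm, mul_assoc, mul_left_comm] using
          ((hasDerivAt_id t).const_mul ℓ).mul_const (inner ℝ x v : ℝ)
      have h2 : HasDerivAt (fun t : ℝ => (ℓ / 2) * t ^ 2 * ‖v‖ ^ 2)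
          ((ℓ / 2) * (2 * t ^ 1) * ‖v‖ ^ 2) t := by
        simpa [mul_assoc] using
          (((hasDerivAt_pow 2 t).const_mul (ℓ / 2)).mul_const (‖v‖ ^ 2))
      have := (h1.const_add ((ℓ / 2) * ‖x‖ ^ 2)).add h2
      refine this.congr_deriv ?_
      ring
    rw [hgeq]
    exact hF.add hQ
  have hdg : Differentiable ℝ g := fun t => (hd t).differentiableAt
  have hderiv : deriv g = g' := funext fun t => (hd t).deriv
  have hmono : Monotone g' := by
    intro s t hst
    simp only [hg']
    have hdiffLin := hgrad (x + t • v, y) (x + s • v, y) hy hy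
    have hzz : ((x + t • v, y) : EuclideanSpace ℝ (Fin d₁) × EuclideanSpace ℝ (Fin d₂))
        - (x + s • v, y) = ((t - s) • v, 0) := by
      ext i <;> simp [sub_smul] <;> ring
    have hnorm : ‖((x + t • v, y) : EuclideanSpace ℝ (Fin d₁) × EuclideanSpace ℝ (Fin d₂))
        - (x + s • v, y)‖ = (t - s) * ‖v‖ := by
      rw [hzz, Prod.norm_def]
      simp only [norm_zero, norm_smul]
      rw [max_eq_left (by positivity), Real.norm_eq_abs, abs_of_nonneg (sub_nonneg.2 hst)]
    set Δ := fderiv ℝ f (x + t • v, y) - fderiv ℝ f (x + s • v, y) with hΔ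
    have hΔnorm : ‖Δ‖ ≤ ℓ * ((t - s) * ‖v‖) := by
      rw [hΔ]; rw [hnorm] at hdiffLin; exact hdiffLin
    have happ : |Δ (v, (0 : EuclideanSpace ℝ (Fin d₂)))| ≤ ℓ * ((t - s) * ‖v‖) * ‖v‖ := by
      calc |Δ (v, 0)| = ‖Δ (v, (0 : EuclideanSpace ℝ (Fin d₂)))‖ := rfl
        _ ≤ ‖Δ‖ * ‖((v, 0) : EuclideanSpace ℝ (Fin d₁) × EuclideanSpace ℝ (Fin d₂))‖ :=
          Δ.le_opNorm _
        _ = ‖Δ‖ * ‖v‖ := by rw [Prod.norm_def]; simp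
        _ ≤ ℓ * ((t - s) * ‖v‖) * ‖v‖ :=
          mul_le_mul_of_nonneg_right hΔnorm (norm_nonneg v)
    have hΔapp : Δ (v, (0 : EuclideanSpace ℝ (Fin d₂)))
        = fderiv ℝ f (x + t • v, y) (v, 0) - fderiv ℝ f (x + s • v, y) (v, 0) := by
      rw [hΔ]; simp
    have hlow : -(ℓ * ((t - s) * ‖v‖) * ‖v‖) ≤ Δ (v, (0 : EuclideanSpace ℝ (Fin d₂))) :=
      neg_le_of_abs_le happ
    rw [hΔapp] at hlow
    nlinarith [hlow]
  exact (show Monotone (deriv g) from hderiv ▸ hmono).convexOn_univ_of_deriv hdg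

end

noncomputable section

/-- If `Y` is a nonempty compact set and `f : ℝ^{d₁} × Y → ℝ` has an
`ℓ`-Lipschitz gradient (over points whose second component lies in `Y`), then
`φ (x) := max_{y ∈ Y} f (x, y)` is `ℓ`-weakly convex, i.e.
`x ↦ φ x + (ℓ/2) ‖x‖²` is convex. -/
theorem stmt_17 {d₁ d₂ : ℕ}
    (Y : Set (EuclideanSpace ℝ (Fin d₂))) (hY : IsCompact Y) (hYne : Y.Nonempty)
    (f : EuclideanSpace ℝ (Fin d₁) × EuclideanSpace ℝ (Fin d₂) → ℝ) (ℓ : ℝ)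
    (hdiff : Differentiable ℝ f)
    (hgrad : ∀ z z' : EuclideanSpace ℝ (Fin d₁) × EuclideanSpace ℝ (Fin d₂),
      z.2 ∈ Y → z'.2 ∈ Y → ‖fderiv ℝ f z - fderiv ℝ f z'‖ ≤ ℓ * ‖z - z'‖) :
    ConvexOn ℝ Set.univ
      (fun x : EuclideanSpace ℝ (Fin d₁) =>
        sSup ((fun y => f (x, y)) '' Y) + (ℓ / 2) * ‖x‖ ^ 2) := by
  have hbdd : ∀ w : EuclideanSpace ℝ (Fin d₁), BddAbove ((fun y => f (w, y)) '' Y) := by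
    intro w
    exact (hY.image ((hdiff.continuous).comp (Continuous.prodMk_right w))).bddAbove
  refine ⟨convex_univ, ?_⟩
  intro x _ x' _ a b ha hb hab
  set z := a • x + b • x' with hz
  simp only [smul_eq_mul]
  have hle : ∀ y ∈ Y, f (z, y) + (ℓ / 2) * ‖z‖ ^ 2 ≤
      a * (f (x, y) + (ℓ / 2) * ‖x‖ ^ 2) + b * (f (x', y) + (ℓ / 2) * ‖x'‖ ^ 2) := by
    intro y hy
    have hc := line_convex Y f ℓ hdiff hgrad y hy x (x' - x)
    have h2 := hc.2 (mem_univ (0 : ℝ)) (mem_univ (1 : ℝ)) ha hb hab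
    simp only [smul_eq_mul, mul_zero, mul_one, zero_add] at h2
    have e0 : x + (0 : ℝ) • (x' - x) = x := by module
    have e1 : x + (1 : ℝ) • (x' - x) = x' := by module
    have eb : x + b • (x' - x) = z := by
      rw [hz]
      have : a = 1 - b := by linarith
      rw [this]; module
    rw [e0, e1, eb] at h2
    exact h2
  have h1 : sSup ((fun y => f (z, y)) '' Y) ≤
      a * (sSup ((fun y => f (x, y)) '' Y) + (ℓ / 2) * ‖x‖ ^ 2)
        + b * (sSup ((fun y => f (x', y)) '' Y) + (ℓ / 2) * ‖x'‖ ^ 2)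
        - (ℓ / 2) * ‖z‖ ^ 2 := by
    apply csSup_le (hYne.image _)
    rintro r ⟨y, hy, rfl⟩
    have hx := le_csSup (hbdd x) (mem_image_of_mem _ hy)
    have hx' := le_csSup (hbdd x') (mem_image_of_mem _ hy)
    have hax := mul_le_mul_of_nonneg_left
      (add_le_add_right hx ((ℓ / 2) * ‖x‖ ^ 2)) ha
    have hbx := mul_le_mul_of_nonneg_left
      (add_le_add_right hx' ((ℓ / 2) * ‖x'‖ ^ 2)) hb
    have := hle y hy
    linarith
  linarith
end
end

section
/- Let f: ℝ^{d₁} × Y → ℝ be ℓ-smooth and L-Lipschitz with Y compact, define φ(x) := max_{y ∈ Y} f(x,y) and its Moreau envelope φ_{1/2ℓ}(x) := min_{x'} [φ(x') + ℓ‖x − x'‖²], and assume φ is bounded below. Fix ε ≥ 0, T ∈ ℕ, γ > 0, and step size η = γ/√(T+1). Let (x_t)_{t=0}^{T} be any sequence such that for each t there exists y_t ∈ Y with f(x_t, y_t) ≥ max_{y∈Y} f(x_t, y) − ε and x_{t+1} = x_t − η ∇_x f(x_t, y_t). Then the average of the squared Moreau-envelope gradient norms satisfies (1/(T+1)) ∑_{t=0}^{T}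 ‖∇φ_{1/2ℓ}(x_t)‖² ≤ 2·[(φ_{1/2ℓ}(x_0) − min_x φ(x)) + ℓ L² γ²]/(γ√(T+1)) + 4ℓε. -/
open Metric Set Filter Topology
open scoped RealInnerProductSpace

noncomputable section

theorem quad_lower' {E : Type*} [NormedAddCommGroup E] [NormedSpace ℝ E]
    (g : E → ℝ) (c : ℝ) (hc : 0 ≤ c) (hg : Differentiable ℝ g)
    (hl : ∀ u v : E, ‖fderiv ℝ g u - fderiv ℝ g v‖ ≤ c * ‖u - v‖) (a b : E) :
    g a + fderiv ℝ g a (b - a) - c / 2 * ‖b - a‖ ^ 2 ≤ g b := by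
  set v := b - a with hv
  set F' : ℝ → ℝ := fun t => fderiv ℝ g (a + t • v) v with hF'
  have hcoe : ((c * ‖v‖ ^ 2).toNNReal : ℝ) = c * ‖v‖ ^ 2 :=
    Real.coe_toNNReal _ (by positivity)
  have hpath : ∀ t : ℝ, HasDerivAt (fun s : ℝ => a + s • v) v t := by
    intro t
    simpa using ((hasDerivAt_id t).smul_const v).const_add a
  have hF : ∀ t : ℝ, HasDerivAt (fun s => g (a + s • v)) (F' t) t := by
    intro t
    exact ((hg (a + t • v)).hasFDerivAt.comp_hasDerivAt t (hpath t))
  have hlip : LipschitzWith (c * ‖v‖ ^ 2).toNNReal F' := by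
    apply LipschitzWith.of_dist_le_mul
    intro s t
    have h1 : ‖fderiv ℝ g (a + s • v) - fderiv ℝ g (a + t • v)‖ ≤ c * ‖(s - t) • v‖ := by
      have := hl (a + s • v) (a + t • v)
      simpa [add_sub_add_left_eq_sub, ← sub_smul] using this
    have h2 : dist (F' s) (F' t) ≤ ‖fderiv ℝ g (a + s • v) - fderiv ℝ g (a + t • v)‖ * ‖v‖ := by
      rw [Real.dist_eq]
      have heq : F' s - F' t = (fderiv ℝ g (a + s • v) - fderiv ℝ g (a + t • v)) v := by
        simp [hF']
      rw [← Real.norm_eq_abs, heq]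
      exact (fderiv ℝ g (a + s • v) - fderiv ℝ g (a + t • v)).le_opNorm v
    have h3 : ‖(s - t) • v‖ = |s - t| * ‖v‖ := by
      rw [norm_smul, Real.norm_eq_abs]
    calc dist (F' s) (F' t) ≤ (c * (|s - t| * ‖v‖)) * ‖v‖ := by
          refine h2.trans ?_
          exact mul_le_mul_of_nonneg_right (h1.trans_eq (by rw [h3])) (norm_nonneg v)
      _ = ((c * ‖v‖ ^ 2).toNNReal : ℝ) * dist s t := by
          rw [hcoe, Real.dist_eq]; ring
  have hcont : Continuous F' := hlip.continuous
  have hFTC : g b - g a = ∫ t in (0:ℝ)..1, F' t := by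
    have := intervalIntegral.integral_eq_sub_of_hasDerivAt
      (f := fun s => g (a + s • v)) (f' := F') (a := 0) (b := 1)
      (fun t _ => hF t) (hcont.intervalIntegrable 0 1)
    simp only [zero_smul, add_zero, one_smul] at this
    rw [this]
    congr 1
    simp [hv]
  have hmono : ∀ t ∈ Set.Icc (0:ℝ) 1, F' 0 - c * ‖v‖ ^ 2 * t ≤ F' t := by
    intro t ht
    have h1 := hlip.dist_le_mul t 0
    rw [Real.dist_eq, Real.dist_eq, sub_zero, hcoe, abs_of_nonneg ht.1] at h1
    have h2 := abs_le.mp h1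
    linarith [h2.1]
  have hint : ∫ t in (0:ℝ)..1, (F' 0 - c * ‖v‖ ^ 2 * t) ≤ ∫ t in (0:ℝ)..1, F' t := by
    apply intervalIntegral.integral_mono_on (by norm_num)
    · exact ((by fun_prop : Continuous fun t : ℝ => F' 0 - c * ‖v‖ ^ 2 * t).intervalIntegrable 0 1)
    · exact hcont.intervalIntegrable 0 1
    · exact hmono
  have hval : ∫ t in (0:ℝ)..1, (F' 0 - c * ‖v‖ ^ 2 * t) = F' 0 - c / 2 * ‖v‖ ^ 2 := by
    rw [intervalIntegral.integral_sub intervalIntegrable_const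
      ((by fun_prop : Continuous fun t : ℝ => c * ‖v‖ ^ 2 * t).intervalIntegrable 0 1)]
    have : ∫ t in (0:ℝ)..1, c * ‖v‖ ^ 2 * t = c * ‖v‖ ^ 2 * ∫ t in (0:ℝ)..1, t :=
      intervalIntegral.integral_const_mul _ _
    rw [this, integral_id, intervalIntegral.integral_const]
    norm_num
    ring
  have hF'0 : F' 0 = fderiv ℝ g a v := by simp [hF']
  linarith [hint, hval, hFTC, hF'0]

theorem sq_expand {E : Type*} [NormedAddCommGroup E] [InnerProductSpace ℝ E] (a b q : E) :
    ‖a - q‖ ^ 2 - ‖b - q‖ ^ 2 = ‖a‖ ^ 2 - ‖b‖ ^ 2 - 2 * ⟪a - b, q⟫ := by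
  rw [norm_sub_sq_real, norm_sub_sq_real, inner_sub_left]
  ring

theorem combo_norm {E : Type*} [NormedAddCommGroup E] [InnerProductSpace ℝ E]
    (p u : E) (t : ℝ) :
    ‖p + t • (u - p)‖ ^ 2 = (1 - t) * ‖p‖ ^ 2 + t * ‖u‖ ^ 2 - t * (1 - t) * ‖u - p‖ ^ 2 := by
  have h1 : ‖p + t • (u - p)‖ ^ 2 = ‖p‖ ^ 2 + 2 * (t * ⟪p, u - p⟫) + t ^ 2 * ‖u - p‖ ^ 2 := by
    rw [norm_add_sq_real, real_inner_smul_right, norm_smul, Real.norm_eq_abs, mul_pow, sq_abs]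
  have h2 : ‖u‖ ^ 2 = ‖p‖ ^ 2 + 2 * ⟪p, u - p⟫ + ‖u - p‖ ^ 2 := by
    have := norm_add_sq_real p (u - p)
    simpa using this
  rw [h1, h2]; ring

theorem strong_min {E : Type*} [NormedAddCommGroup E] [InnerProductSpace ℝ E]
    (g : E → ℝ) (c : ℝ) (hc : 0 ≤ c) (p : E) (hmin : ∀ u, g p ≤ g u)
    (hconv : ∀ (u : E) (t : ℝ), 0 ≤ t → t ≤ 1 →
      g (p + t • (u - p)) ≤ (1 - t) * g p + t * g u - c / 2 * t * (1 - t) * ‖u - p‖ ^ 2) :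
    ∀ u, g p + c / 2 * ‖u - p‖ ^ 2 ≤ g u := by
  intro u
  by_contra hcon
  push_neg at hcon
  set C := c / 2 * ‖u - p‖ ^ 2 with hC
  have hC0 : 0 ≤ C := by positivity
  set δ := g p + C - g u with hδdef
  have hδ : 0 < δ := by simp only [hδdef]; linarith
  set t := min 1 (δ / (C + 1)) with ht
  have ht0 : 0 < t := lt_min one_pos (div_pos hδ (by linarith))
  have ht1 : t ≤ 1 := min_le_left _ _
  have h1 := hconv u t ht0.le ht1
  have h2 := hmin (p + t • (u - p))
  have h3 : 0 ≤ t * (g u - g p) - c / 2 * t * (1 - t) * ‖u - p‖ ^ 2 := by nlinarith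
  have h4 : 0 ≤ (g u - g p) - (1 - t) * C := by
    have heq : t * ((g u - g p) - (1 - t) * C) =
        t * (g u - g p) - c / 2 * t * (1 - t) * ‖u - p‖ ^ 2 := by rw [hC]; ring
    have h3' : 0 ≤ t * ((g u - g p) - (1 - t) * C) := by rw [heq]; exact h3
    by_contra h4n
    push_neg at h4n
    have : t * ((g u - g p) - (1 - t) * C) < 0 := mul_neg_of_pos_of_neg ht0 h4n
    linarith
  have h5 : t * C < δ := by
    have htle : t ≤ δ / (C + 1) := min_le_right _ _
    have : t * C ≤ δ / (C + 1) * C := by nlinarith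
    have h6 : δ / (C + 1) * C < δ := by
      rw [div_mul_eq_mul_div, div_lt_iff₀ (by linarith)]
      nlinarith
    linarith
  simp only [hδdef] at h5
  nlinarith

set_option maxHeartbeats 2000000 in
/-- Convergence of gradient descent with an `ε`-approximate max-oracle: for
`ℓ`-smooth, `L`-Lipschitz `f`, `φ (x) := max_{y ∈ Y} f (x, y)`, Moreau
envelope `φM = φ_{1/2ℓ}` and step size `η = γ/√(T+1)`, the iterates
`x_{t+1} = x_t - η ∇_x f (x_t, y_t)` with `y_t` an `ε`-approximate maximizer
satisfy
`(1/(T+1)) ∑_{t ≤ T} ‖∇φ_{1/2ℓ}(x_t)‖² ≤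
  2 ((φ_{1/2ℓ}(x_0) - min φ) + ℓ L² γ²)/(γ √(T+1)) + 4 ℓ ε`. -/
theorem stmt_18 {d₁ d₂ : ℕ}
    (Y : Set (EuclideanSpace ℝ (Fin d₂))) (hY : IsCompact Y) (hYne : Y.Nonempty)
    (f : EuclideanSpace ℝ (Fin d₁) × EuclideanSpace ℝ (Fin d₂) → ℝ)
    (ℓ L : ℝ) (hℓ : 0 < ℓ)
    (hdiff : Differentiable ℝ f)
    (hsmooth : ∀ z z' : EuclideanSpace ℝ (Fin d₁) × EuclideanSpace ℝ (Fin d₂),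
      z.2 ∈ Y → z'.2 ∈ Y → ‖fderiv ℝ f z - fderiv ℝ f z'‖ ≤ ℓ * ‖z - z'‖)
    (hLip : ∀ z z' : EuclideanSpace ℝ (Fin d₁) × EuclideanSpace ℝ (Fin d₂),
      z.2 ∈ Y → z'.2 ∈ Y → |f z - f z'| ≤ L * ‖z - z'‖)
    (φ φM : EuclideanSpace ℝ (Fin d₁) → ℝ)
    (hφ : φ = fun x => sSup ((fun y => f (x, y)) '' Y))
    (hφM : φM = fun x => sInf (Set.range fun x' => φ x' + ℓ * ‖x - x'‖ ^ 2))
    (hbd : BddBelow (Set.range φ))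
    (ε γ : ℝ) (hε : 0 ≤ ε) (hγ : 0 < γ) (T : ℕ)
    (x : ℕ → EuclideanSpace ℝ (Fin d₁)) (y : ℕ → EuclideanSpace ℝ (Fin d₂))
    (hyY : ∀ t, y t ∈ Y)
    (horacle : ∀ t, ∀ y' ∈ Y, f (x t, y') ≤ f (x t, y t) + ε)
    (hupdate : ∀ t, x (t + 1) =
      x t - (γ / Real.sqrt (T + 1)) • gradient (fun x' => f (x', y t)) (x t)) :
    (1 / (T + 1 : ℝ)) * ∑ t ∈ Finset.range (T + 1), ‖gradient φM (x t)‖ ^ 2 ≤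
      2 * ((φM (x 0) - sInf (Set.range φ)) + ℓ * L ^ 2 * γ ^ 2) /
          (γ * Real.sqrt (T + 1)) +
        4 * ℓ * ε := by
  classical
  have hφa : ∀ a, φ a = sSup ((fun y => f (a, y)) '' Y) := fun a => by rw [hφ]
  have hφMa : ∀ a, φM a = sInf (Set.range fun u => φ u + ℓ * ‖a - u‖ ^ 2) :=
    fun a => by rw [hφM]
  set m := sInf (Set.range φ) with hm
  -- norm of pairs with equal second coordinate
  have hnorm_pair : ∀ (a b : EuclideanSpace ℝ (Fin d₁)) (yy : EuclideanSpace ℝ (Fin d₂)),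
      ‖((a, yy) : EuclideanSpace ℝ (Fin d₁) × EuclideanSpace ℝ (Fin d₂)) - (b, yy)‖
        = ‖a - b‖ := by
    intro a b yy
    have h1 : ((a, yy) : EuclideanSpace ℝ (Fin d₁) × EuclideanSpace ℝ (Fin d₂)) - (b, yy)
        = ((a - b, 0) : EuclideanSpace ℝ (Fin d₁) × EuclideanSpace ℝ (Fin d₂)) := by
      rw [Prod.mk_sub_mk, sub_self]
    rw [h1, Prod.norm_def]
    simp [max_eq_left (norm_nonneg (a - b))]
  -- max attained
  have hmax : ∀ a, ∃ ym ∈ Y, φ a = f (a, ym) ∧ ∀ yy ∈ Y, f (a, yy) ≤ φ a := by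
    intro a
    have hc : ContinuousOn (fun yy => f (a, yy)) Y :=
      (hdiff.continuous.comp (Continuous.prodMk_right a)).continuousOn
    obtain ⟨ym, hymY, hym⟩ := hY.exists_isMaxOn hYne hc
    have hgr : IsGreatest ((fun y => f (a, y)) '' Y) (f (a, ym)) := by
      constructor
      · exact ⟨ym, hymY, rfl⟩
      · rintro _ ⟨yy, hyyY, rfl⟩
        exact (isMaxOn_iff.mp hym) yy hyyY
    refine ⟨ym, hymY, ?_, ?_⟩
    · rw [hφa a, hgr.csSup_eq]
    · intro yy hyy
      rw [hφa a]
      exact le_csSup ⟨f (a, ym), fun z hz => hgr.2 hz⟩ ⟨yy, hyy, rfl⟩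
  -- lower bound on φ
  have hmφ : ∀ a, m ≤ φ a := fun a => csInf_le hbd ⟨a, rfl⟩
  -- φ is Lipschitz-continuous
  have hφLip : ∀ a b, φ a ≤ φ b + L * ‖a - b‖ := by
    intro a b
    obtain ⟨ym, hymY, hval, -⟩ := hmax a
    obtain ⟨ym', hymY', hval', hub'⟩ := hmax b
    have h1 := hLip (a, ym) (b, ym) hymY hymY
    rw [hnorm_pair] at h1
    have h2 : f (a, ym) - f (b, ym) ≤ L * ‖a - b‖ :=
      (le_abs_self _).trans h1
    have h3 := hub' ym hymY
    rw [hval]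
    linarith
  have hφcont : Continuous φ := by
    have hlip : LipschitzWith (Real.toNNReal |L|) φ := by
      apply LipschitzWith.of_dist_le_mul
      intro a b
      rw [Real.dist_eq, Real.coe_toNNReal _ (abs_nonneg L), dist_eq_norm]
      have h1 := hφLip a b
      have h2 := hφLip b a
      rw [norm_sub_rev b a] at h2
      have hL1 : L * ‖a - b‖ ≤ |L| * ‖a - b‖ :=
        mul_le_mul_of_nonneg_right (le_abs_self L) (norm_nonneg _)
      rw [abs_le]
      constructor <;> linarith
    exact hlip.continuous
  -- existence of proximal points
  have hprox : ∀ a, ∃ p,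
      (∀ u, φ p + ℓ * ‖a - p‖ ^ 2 ≤ φ u + ℓ * ‖a - u‖ ^ 2) ∧
      φM a = φ p + ℓ * ‖a - p‖ ^ 2 := by
    intro a
    set g := fun u => φ u + ℓ * ‖a - u‖ ^ 2 with hgdef
    have hgc : Continuous g := by
      apply hφcont.add
      exact continuous_const.mul (((continuous_const.sub continuous_id).norm).pow 2)
    set R := Real.sqrt ((φ a - m) / ℓ) + 1 with hRdef
    have hR0 : 0 < R := by positivity
    obtain ⟨p, hpB, hpmin⟩ := (isCompact_closedBall a R).exists_isMinOn
      ⟨a, mem_closedBall_self hR0.le⟩ hgc.continuousOn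
    have hmin : ∀ u, g p ≤ g u := by
      intro u
      by_cases hu : u ∈ closedBall a R
      · exact (isMinOn_iff.mp hpmin) u hu
      · have h1 : R < dist u a := by
          rw [mem_closedBall, not_le] at hu
          exact hu
        have hq : Real.sqrt ((φ a - m) / ℓ) ^ 2 = (φ a - m) / ℓ :=
          Real.sq_sqrt (div_nonneg (by linarith [hmφ a]) hℓ.le)
        have h2 : φ a - m ≤ ℓ * R ^ 2 := by
          have hR2 : (φ a - m) / ℓ ≤ R ^ 2 := by
            rw [hRdef]
            nlinarith [Real.sqrt_nonneg ((φ a - m) / ℓ)]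
          calc φ a - m = ℓ * ((φ a - m) / ℓ) := by field_simp
            _ ≤ ℓ * R ^ 2 := by nlinarith
        have h3 : m + ℓ * R ^ 2 ≤ g u := by
          have h4 : R ≤ ‖a - u‖ := by
            rw [dist_eq_norm] at h1
            rw [norm_sub_rev a u]
            linarith
          have h5 : ℓ * R ^ 2 ≤ ℓ * ‖a - u‖ ^ 2 := by
            nlinarith [mul_le_mul h4 h4 hR0.le (norm_nonneg (a - u)), hℓ.le]
          have h6 := hmφ u
          simp only [hgdef]
          linarith
        have h7 : g a ≤ m + ℓ * R ^ 2 := by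
          simp only [hgdef]
          simp only [sub_self, norm_zero]
          norm_num
          linarith
        have h8 := (isMinOn_iff.mp hpmin) a (mem_closedBall_self hR0.le)
        linarith
    refine ⟨p, hmin, ?_⟩
    rw [hφMa a]
    exact IsLeast.csInf_eq ⟨⟨p, rfl⟩, by rintro _ ⟨u, rfl⟩; exact hmin u⟩
  choose xh hxh1 hxh2 using hprox
  have hφMle : ∀ a u, φM a ≤ φ u + ℓ * ‖a - u‖ ^ 2 := by
    intro a u; rw [hxh2 a]; exact hxh1 a u
  have hφMlb : ∀ a, m ≤ φM a := by
    intro a; rw [hxh2 a]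
    have := hmφ (xh a)
    nlinarith [sq_nonneg ‖a - xh a‖]
  -- the gradients of the partial maps
  have hdiffy : ∀ yy : EuclideanSpace ℝ (Fin d₂), Differentiable ℝ (fun u => f (u, yy)) :=
    fun yy u => (hdiff (u, yy)).comp u (differentiableAt_id.prodMk (differentiableAt_const yy))
  have hginner : ∀ (yy : EuclideanSpace ℝ (Fin d₂)) (u w : EuclideanSpace ℝ (Fin d₁)),
      fderiv ℝ (fun u => f (u, yy)) u w = ⟪gradient (fun u => f (u, yy)) u, w⟫ := by
    intro yy u w
    have h := ((hdiffy yy) u).hasGradientAt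
    have h2 := hasGradientAt_iff_hasFDerivAt.mp h
    rw [h2.fderiv]
    exact InnerProductSpace.toDual_apply_apply
  -- the KEY quadratic lower bound
  have KEY : ∀ yy ∈ Y, ∀ a b,
      f (a, yy) + ⟪gradient (fun u => f (u, yy)) a, b - a⟫ - ℓ / 2 * ‖b - a‖ ^ 2
        ≤ f (b, yy) := by
    intro yy hyy a b
    have hlipD : ∀ u w : EuclideanSpace ℝ (Fin d₁),
        ‖fderiv ℝ (fun u => f (u, yy)) u - fderiv ℝ (fun u => f (u, yy)) w‖ ≤ ℓ * ‖u - w‖ := by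
      intro u w
      have hu : HasFDerivAt (fun u => f (u, yy))
          ((fderiv ℝ f (u, yy)).comp (ContinuousLinearMap.inl ℝ _ _)) u :=
        (hdiff (u, yy)).hasFDerivAt.comp u (hasFDerivAt_prodMk_left u yy)
      have hw : HasFDerivAt (fun u => f (u, yy))
          ((fderiv ℝ f (w, yy)).comp (ContinuousLinearMap.inl ℝ _ _)) w :=
        (hdiff (w, yy)).hasFDerivAt.comp w (hasFDerivAt_prodMk_left w yy)
      rw [hu.fderiv, hw.fderiv, ← ContinuousLinearMap.sub_comp]
      refine ContinuousLinearMap.opNorm_le_bound _ (by positivity) ?_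
      intro v
      have h2 := hsmooth (u, yy) (w, yy) hyy hyy
      rw [hnorm_pair] at h2
      have hv0 : ‖((v, 0) : EuclideanSpace ℝ (Fin d₁) × EuclideanSpace ℝ (Fin d₂))‖ = ‖v‖ := by
        rw [Prod.norm_def]
        simp [max_eq_left (norm_nonneg v)]
      calc ‖((fderiv ℝ f (u, yy) - fderiv ℝ f (w, yy)).comp
              (ContinuousLinearMap.inl ℝ _ _)) v‖
          = ‖(fderiv ℝ f (u, yy) - fderiv ℝ f (w, yy))
              ((v, 0) : EuclideanSpace ℝ (Fin d₁) × EuclideanSpace ℝ (Fin d₂))‖ := rfl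
        _ ≤ ‖fderiv ℝ f (u, yy) - fderiv ℝ f (w, yy)‖ * ‖v‖ := by
            have := (fderiv ℝ f (u, yy) - fderiv ℝ f (w, yy)).le_opNorm
              ((v, 0) : EuclideanSpace ℝ (Fin d₁) × EuclideanSpace ℝ (Fin d₂))
            rwa [hv0] at this
        _ ≤ ℓ * ‖u - w‖ * ‖v‖ := mul_le_mul_of_nonneg_right h2 (norm_nonneg v)
    have h := quad_lower' (fun u => f (u, yy)) ℓ hℓ.le (hdiffy yy) hlipD a b
    rwa [hginner yy a (b - a)] at h
  -- strong growth at the proximal point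
  have SC : ∀ a u,
      φ (xh a) + ℓ * ‖a - xh a‖ ^ 2 + ℓ / 2 * ‖u - xh a‖ ^ 2 ≤ φ u + ℓ * ‖a - u‖ ^ 2 := by
    intro a u₀
    have hconv : ∀ (u : EuclideanSpace ℝ (Fin d₁)) (t : ℝ), 0 ≤ t → t ≤ 1 →
        φ (xh a + t • (u - xh a)) + ℓ * ‖a - (xh a + t • (u - xh a))‖ ^ 2 ≤
          (1 - t) * (φ (xh a) + ℓ * ‖a - xh a‖ ^ 2) + t * (φ u + ℓ * ‖a - u‖ ^ 2) -
          ℓ / 2 * t * (1 - t) * ‖u - xh a‖ ^ 2 := by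
      intro u t ht0 ht1
      obtain ⟨ym, hymY, hval, hub⟩ := hmax (xh a + t • (u - xh a))
      obtain ⟨ym1, hym1Y, hval1, hubp⟩ := hmax (xh a)
      obtain ⟨ym2, hym2Y, hval2, hubu⟩ := hmax u
      have hsub : ∀ z, f (xh a + t • (u - xh a), ym) + ℓ / 2 * ‖xh a + t • (u - xh a)‖ ^ 2 +
          ⟪gradient (fun v => f (v, ym)) (xh a + t • (u - xh a))
            + ℓ • (xh a + t • (u - xh a)), z - (xh a + t • (u - xh a))⟫
          ≤ f (z, ym) + ℓ / 2 * ‖z‖ ^ 2 := by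
        intro z
        have h1 := KEY ym hymY (xh a + t • (u - xh a)) z
        have h3 : ‖z‖ ^ 2 = ‖xh a + t • (u - xh a)‖ ^ 2
            + 2 * ⟪xh a + t • (u - xh a), z - (xh a + t • (u - xh a))⟫
            + ‖z - (xh a + t • (u - xh a))‖ ^ 2 := by
          have := norm_add_sq_real (xh a + t • (u - xh a)) (z - (xh a + t • (u - xh a)))
          simpa using this
        have h2 : ℓ / 2 * ‖z‖ ^ 2 = ℓ / 2 * ‖xh a + t • (u - xh a)‖ ^ 2
            + ℓ * ⟪xh a + t • (u - xh a), z - (xh a + t • (u - xh a))⟫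
            + ℓ / 2 * ‖z - (xh a + t • (u - xh a))‖ ^ 2 := by rw [h3]; ring
        have h4 : (⟪gradient (fun v => f (v, ym)) (xh a + t • (u - xh a))
              + ℓ • (xh a + t • (u - xh a)), z - (xh a + t • (u - xh a))⟫ : ℝ)
            = ⟪gradient (fun v => f (v, ym)) (xh a + t • (u - xh a)),
                z - (xh a + t • (u - xh a))⟫
              + ℓ * ⟪xh a + t • (u - xh a), z - (xh a + t • (u - xh a))⟫ := by
          rw [inner_add_left, real_inner_smul_left]
        rw [h4]
        linarith
      have ha' := mul_le_mul_of_nonneg_left (hsub (xh a)) (by linarith : (0:ℝ) ≤ 1 - t)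
      have hb' := mul_le_mul_of_nonneg_left (hsub u) ht0
      have hinner0 : (1 - t) * ⟪gradient (fun v => f (v, ym)) (xh a + t • (u - xh a))
              + ℓ • (xh a + t • (u - xh a)), xh a - (xh a + t • (u - xh a))⟫
          + t * ⟪gradient (fun v => f (v, ym)) (xh a + t • (u - xh a))
              + ℓ • (xh a + t • (u - xh a)), u - (xh a + t • (u - xh a))⟫ = 0 := by
        have h0 : (1 - t) • (xh a - (xh a + t • (u - xh a)))
            + t • (u - (xh a + t • (u - xh a))) = (0 : EuclideanSpace ℝ (Fin d₁)) := by
          module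
        have h6 : (⟪gradient (fun v => f (v, ym)) (xh a + t • (u - xh a))
              + ℓ • (xh a + t • (u - xh a)), (1 - t) • (xh a - (xh a + t • (u - xh a)))
              + t • (u - (xh a + t • (u - xh a)))⟫ : ℝ)
            = (1 - t) * ⟪gradient (fun v => f (v, ym)) (xh a + t • (u - xh a))
              + ℓ • (xh a + t • (u - xh a)), xh a - (xh a + t • (u - xh a))⟫
              + t * ⟪gradient (fun v => f (v, ym)) (xh a + t • (u - xh a))
              + ℓ • (xh a + t • (u - xh a)), u - (xh a + t • (u - xh a))⟫ := by
          rw [inner_add_right, real_inner_smul_right, real_inner_smul_right]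
        rw [← h6, h0, inner_zero_right]
      have hcvx : φ (xh a + t • (u - xh a)) + ℓ / 2 * ‖xh a + t • (u - xh a)‖ ^ 2
          ≤ (1 - t) * (φ (xh a) + ℓ / 2 * ‖xh a‖ ^ 2) + t * (φ u + ℓ / 2 * ‖u‖ ^ 2) := by
        have e1 := hubp ym hymY
        have e2 := hubu ym hymY
        have e1' := mul_le_mul_of_nonneg_left e1 (by linarith : (0:ℝ) ≤ 1 - t)
        have e2' := mul_le_mul_of_nonneg_left e2 ht0
        rw [hval]
        nlinarith [ha', hb', hinner0, e1', e2']
      have hcombo : ‖xh a + t • (u - xh a)‖ ^ 2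
          = (1 - t) * ‖xh a‖ ^ 2 + t * ‖u‖ ^ 2 - t * (1 - t) * ‖u - xh a‖ ^ 2 :=
        combo_norm (xh a) u t
      have hcombo2 : ‖a - (xh a + t • (u - xh a))‖ ^ 2
          = (1 - t) * ‖a - xh a‖ ^ 2 + t * ‖a - u‖ ^ 2 - t * (1 - t) * ‖u - xh a‖ ^ 2 := by
        have hc := combo_norm (a - xh a) (a - u) t
        have h1 : (a - xh a) + t • ((a - u) - (a - xh a)) = a - (xh a + t • (u - xh a)) := by
          module
        have h2 : ‖(a - u) - (a - xh a)‖ = ‖u - xh a‖ := by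
          rw [show (a - u) - (a - xh a) = -(u - xh a) by abel, norm_neg]
        rw [h1, h2] at hc
        exact hc
      have e3 : ℓ * ‖a - (xh a + t • (u - xh a))‖ ^ 2 - ℓ / 2 * ‖xh a + t • (u - xh a)‖ ^ 2
          = (1 - t) * (ℓ * ‖a - xh a‖ ^ 2 - ℓ / 2 * ‖xh a‖ ^ 2)
            + t * (ℓ * ‖a - u‖ ^ 2 - ℓ / 2 * ‖u‖ ^ 2)
            - ℓ / 2 * t * (1 - t) * ‖u - xh a‖ ^ 2 := by
        rw [hcombo2, hcombo]; ring
      linarith [hcvx, e3]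
    have := strong_min (fun v => φ v + ℓ * ‖a - v‖ ^ 2) ℓ hℓ.le (xh a) (hxh1 a) hconv u₀
    simpa using this
  -- Lipschitz continuity of the proximal map
  have hxhL : ∀ a b, ‖xh a - xh b‖ ≤ 2 * ‖a - b‖ := by
    intro a b
    have h1 := SC a (xh b)
    have h2 := SC b (xh a)
    have e1 := congrArg (fun r => ℓ * r) (sq_expand a b (xh b))
    have e2 := congrArg (fun r => ℓ * r) (sq_expand b a (xh a))
    have hip := abs_real_inner_le_norm (a - b) (xh a - xh b)
    have hip' := mul_le_mul_of_nonneg_left ((le_abs_self _).trans hip)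
      (by positivity : (0:ℝ) ≤ 2 * ℓ)
    have hi2 := congrArg (fun r => ℓ * r)
      (show (⟪b - a, xh a⟫ : ℝ) = -⟪a - b, xh a⟫ by
        rw [show b - a = -(a - b) by abel, inner_neg_left])
    have hi3 := congrArg (fun r => 2 * ℓ * r)
      (show (⟪a - b, xh a - xh b⟫ : ℝ) = ⟪a - b, xh a⟫ - ⟪a - b, xh b⟫ from
        inner_sub_right _ _ _)
    have hsymm := congrArg (fun r => ℓ / 2 * r ^ 2) (norm_sub_rev (xh a) (xh b))
    have key : ℓ * ‖xh a - xh b‖ ^ 2 ≤ 2 * ℓ * (‖a - b‖ * ‖xh a - xh b‖) := by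
      linarith [h1, h2, e1, e2, hip', hi2, hi3, hsymm]
    by_cases hz : ‖xh a - xh b‖ = 0
    · rw [hz]; positivity
    · have hzpos : 0 < ‖xh a - xh b‖ := lt_of_le_of_ne (norm_nonneg _) (Ne.symm hz)
      by_contra hc
      push_neg at hc
      nlinarith [key, mul_pos hℓ hzpos]
  -- the gradient of the Moreau envelope
  have hgradφM : ∀ a, gradient φM a = (2 * ℓ) • (a - xh a) := by
    have hasgrad : ∀ a, HasGradientAt φM ((2 * ℓ) • (a - xh a)) a := by
      intro a
      have hub : ∀ b, φM b - φM a - ⟪(2 * ℓ) • (a - xh a), b - a⟫ ≤ ℓ * ‖b - a‖ ^ 2 := by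
        intro b
        have h1 := hφMle b (xh a)
        have h2 := hxh2 a
        have h3 : ‖b - xh a‖ ^ 2 = ‖a - xh a‖ ^ 2 + 2 * ⟪a - xh a, b - a⟫ + ‖b - a‖ ^ 2 := by
          have := norm_add_sq_real (a - xh a) (b - a)
          rw [show (a - xh a) + (b - a) = b - xh a by abel] at this
          exact this
        have h3' := congrArg (fun r => ℓ * r) h3
        have h4 : (⟪(2 * ℓ) • (a - xh a), b - a⟫ : ℝ) = 2 * ℓ * ⟪a - xh a, b - a⟫ :=
          real_inner_smul_left _ _ _
        linarith [h1, h3', h4]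
      have hlb : ∀ b, -(4 * ℓ * ‖b - a‖ ^ 2) ≤ φM b - φM a - ⟪(2 * ℓ) • (a - xh a), b - a⟫ := by
        intro b
        have h1 := hxh2 b
        have h2 := hφMle a (xh b)
        have e1 := congrArg (fun r => ℓ * r) (sq_expand b a (xh b))
        have e2 : ‖b‖ ^ 2 = ‖a‖ ^ 2 + 2 * ⟪a, b - a⟫ + ‖b - a‖ ^ 2 := by
          have := norm_add_sq_real a (b - a)
          rw [show a + (b - a) = b by abel] at this
          exact this
        have e2' := congrArg (fun r => ℓ * r) e2
        have c1 := congrArg (fun r => ℓ * r)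
          (show (⟪b - a, xh b⟫ : ℝ) = ⟪xh b, b - a⟫ from real_inner_comm _ _)
        have h4 : (⟪(2 * ℓ) • (a - xh a), b - a⟫ : ℝ) = 2 * ℓ * ⟪a - xh a, b - a⟫ :=
          real_inner_smul_left _ _ _
        have c2 := congrArg (fun r => 2 * ℓ * r)
          (show (⟪a - xh a, b - a⟫ : ℝ) = ⟪a, b - a⟫ - ⟪xh a, b - a⟫ from
            inner_sub_left _ _ _)
        have c3 := congrArg (fun r => 2 * ℓ * r)
          (show (⟪xh b - xh a, b - a⟫ : ℝ) = ⟪xh b, b - a⟫ - ⟪xh a, b - a⟫ from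
            inner_sub_left _ _ _)
        have e4 := abs_real_inner_le_norm (xh b - xh a) (b - a)
        have e4'' : 2 * ℓ * (⟪xh b - xh a, b - a⟫ : ℝ) ≤ 2 * ℓ * (‖xh b - xh a‖ * ‖b - a‖) :=
          mul_le_mul_of_nonneg_left ((le_abs_self _).trans e4) (by positivity)
        have e4n : -(2 * ℓ * (‖xh b - xh a‖ * ‖b - a‖)) ≤ 2 * ℓ * (⟪xh b - xh a, b - a⟫ : ℝ) := by
          have := (neg_abs_le (⟪xh b - xh a, b - a⟫ : ℝ))
          nlinarith [e4, hℓ.le]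
        have e5 : 2 * ℓ * (‖xh b - xh a‖ * ‖b - a‖) ≤ 2 * ℓ * (2 * ‖b - a‖ * ‖b - a‖) := by
          have := hxhL b a
          have hm := mul_le_mul_of_nonneg_right this (norm_nonneg (b - a))
          nlinarith [hℓ.le]
        linarith [h1, h2, e1, e2', c1, h4, c2, c3, e4n, e5]
      have hgoal : HasGradientAt φM ((2 * ℓ) • (a - xh a)) a := by
        rw [hasGradientAt_iff_isLittleO, Asymptotics.isLittleO_iff]
        intro c hc
        have hev : ∀ᶠ b in 𝓝 a, ‖b - a‖ ≤ c / (4 * ℓ) := by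
          filter_upwards [Metric.closedBall_mem_nhds a
            (show (0:ℝ) < c / (4 * ℓ) by positivity)] with b hb
          rw [mem_closedBall, dist_eq_norm] at hb
          exact hb
        filter_upwards [hev] with b hb
        have h1 := hub b
        have h2 := hlb b
        have habs : |φM b - φM a - ⟪(2 * ℓ) • (a - xh a), b - a⟫| ≤ 4 * ℓ * ‖b - a‖ ^ 2 := by
          rw [abs_le]
          constructor
          · linarith
          · nlinarith [sq_nonneg ‖b - a‖, hℓ.le]
        calc |φM b - φM a - ⟪(2 * ℓ) • (a - xh a), b - a⟫| ≤ 4 * ℓ * ‖b - a‖ ^ 2 := habs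
          _ = (4 * ℓ * ‖b - a‖) * ‖b - a‖ := by ring
          _ ≤ c * ‖b - a‖ := by
              apply mul_le_mul_of_nonneg_right _ (norm_nonneg _)
              calc 4 * ℓ * ‖b - a‖ ≤ 4 * ℓ * (c / (4 * ℓ)) := by
                    exact mul_le_mul_of_nonneg_left hb (by positivity)
                _ = c := by field_simp
      exact hgoal
    intro a
    exact (hasgrad a).gradient
  -- case split on degeneracy
  rcases le_or_gt L 0 with hL | hL0
  · -- degenerate case: φ is constant, all Moreau gradients vanish
    have hconst : ∀ a b, φ a = φ b := by
      intro a b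
      have h1 := hφLip a b
      have h2 := hφLip b a
      have h3 : L * ‖a - b‖ ≤ 0 := mul_nonpos_of_nonpos_of_nonneg hL (norm_nonneg _)
      have h4 : L * ‖b - a‖ ≤ 0 := mul_nonpos_of_nonpos_of_nonneg hL (norm_nonneg _)
      linarith
    have hxha : ∀ a, xh a = a := by
      intro a
      have h1 := hxh1 a a
      have h2 := hconst (xh a) a
      simp only [sub_self, norm_zero] at h1
      have h5 : ‖a - xh a‖ ^ 2 ≤ 0 := by nlinarith
      have h6 : ‖a - xh a‖ = 0 := by nlinarith [norm_nonneg (a - xh a)]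
      have := sub_eq_zero.mp (norm_eq_zero.mp h6)
      exact this.symm
    have hgz : ∀ t : ℕ, ‖gradient φM (x t)‖ ^ 2 = 0 := by
      intro t
      rw [hgradφM (x t), hxha (x t), sub_self, smul_zero, norm_zero]
      norm_num
    have hsum0 : ∑ t ∈ Finset.range (T + 1), ‖gradient φM (x t)‖ ^ 2 = 0 :=
      Finset.sum_eq_zero fun t _ => hgz t
    rw [hsum0, mul_zero]
    have h1 : 0 ≤ φM (x 0) - m := by linarith [hφMlb (x 0)]
    have h2 : 0 < γ * Real.sqrt ((T : ℝ) + 1) :=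
      mul_pos hγ (Real.sqrt_pos.mpr (by positivity))
    have h3 : 0 ≤ ℓ * L ^ 2 * γ ^ 2 := by positivity
    have h4 : (0:ℝ) ≤ 4 * ℓ * ε := by positivity
    have h5 : 0 ≤ 2 * ((φM (x 0) - m) + ℓ * L ^ 2 * γ ^ 2) / (γ * Real.sqrt ((T : ℝ) + 1)) :=
      div_nonneg (by linarith) h2.le
    linarith
  have hL : 0 ≤ L := hL0.le
  -- gradient norm bound
  have hnormgr : ∀ yy ∈ Y, ∀ u, ‖gradient (fun u => f (u, yy)) u‖ ≤ L := by
    intro yy hyy u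
    have hlipf : LipschitzWith (Real.toNNReal L) (fun u => f (u, yy)) := by
      apply LipschitzWith.of_dist_le_mul
      intro u w
      rw [Real.dist_eq, Real.coe_toNNReal _ hL, dist_eq_norm]
      have := hLip (u, yy) (w, yy) hyy hyy
      rwa [hnorm_pair] at this
    have h1 : ‖fderiv ℝ (fun u => f (u, yy)) u‖ ≤ (Real.toNNReal L : ℝ) :=
      norm_fderiv_le_of_lipschitz ℝ hlipf
    have h2 := hasGradientAt_iff_hasFDerivAt.mp ((hdiffy yy) u).hasGradientAt
    rw [h2.fderiv, Real.coe_toNNReal _ hL] at h1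
    calc ‖gradient (fun u => f (u, yy)) u‖
        = ‖(InnerProductSpace.toDual ℝ (EuclideanSpace ℝ (Fin d₁)))
            (gradient (fun u => f (u, yy)) u)‖ :=
          ((InnerProductSpace.toDual ℝ (EuclideanSpace ℝ (Fin d₁))).norm_map _).symm
      _ ≤ L := h1
  -- step size
  set s := Real.sqrt (T + 1) with hs
  have hs0 : 0 < s := Real.sqrt_pos.mpr (by positivity)
  have hs2 : s ^ 2 = (T : ℝ) + 1 := Real.sq_sqrt (by positivity)
  set η := γ / s with hη
  have hη0 : 0 < η := div_pos hγ hs0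
  -- the per-step estimate
  have key_t : ∀ t : ℕ, η / 2 * ‖gradient φM (x t)‖ ^ 2 ≤
      φM (x t) - φM (x (t + 1)) + 2 * ℓ * η * ε + ℓ * η ^ 2 * L ^ 2 := by
    intro t
    -- (iii) : the inner product bound
    have hiii : ℓ * ‖x t - xh (x t)‖ ^ 2 - ε
        ≤ ⟪gradient (fun x' => f (x', y t)) (x t), x t - xh (x t)⟫ := by
      have h1 := KEY (y t) (hyY t) (x t) (xh (x t))
      obtain ⟨ym, hymY, hval, hub⟩ := hmax (x t)
      have h2 : φ (x t) ≤ f (x t, y t) + ε := by rw [hval]; exact horacle t ym hymY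
      obtain ⟨ym2, hym2Y, hval2, hubp⟩ := hmax (xh (x t))
      have h3 : f (xh (x t), y t) ≤ φ (xh (x t)) := hubp (y t) (hyY t)
      have h4 := SC (x t) (x t)
      simp only [sub_self, norm_zero] at h4
      have h5 : (⟪gradient (fun x' => f (x', y t)) (x t), xh (x t) - x t⟫ : ℝ)
          = -⟪gradient (fun x' => f (x', y t)) (x t), x t - xh (x t)⟫ := by
        rw [show xh (x t) - x t = -(x t - xh (x t)) by abel, inner_neg_right]
      have h6 : ‖xh (x t) - x t‖ = ‖x t - xh (x t)‖ := norm_sub_rev _ _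
      have h6' := congrArg (fun r => ℓ / 2 * r ^ 2) h6
      norm_num at h4
      linarith [h1, h2, h3, h4, h5, h6']
    -- (ii) : expansion of the square
    have hbp : ‖x (t + 1) - xh (x t)‖ ^ 2 = ‖x t - xh (x t)‖ ^ 2
        - 2 * η * ⟪gradient (fun x' => f (x', y t)) (x t), x t - xh (x t)⟫
        + η ^ 2 * ‖gradient (fun x' => f (x', y t)) (x t)‖ ^ 2 := by
      have hb : x (t + 1) - xh (x t)
          = (x t - xh (x t)) - η • gradient (fun x' => f (x', y t)) (x t) := by
        rw [hupdate t]; abel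
      rw [hb, norm_sub_sq_real]
      have h7 : (⟪x t - xh (x t), η • gradient (fun x' => f (x', y t)) (x t)⟫ : ℝ)
          = η * ⟪gradient (fun x' => f (x', y t)) (x t), x t - xh (x t)⟫ := by
        rw [real_inner_smul_right, real_inner_comm]
      have h8 : ‖η • gradient (fun x' => f (x', y t)) (x t)‖ ^ 2
          = η ^ 2 * ‖gradient (fun x' => f (x', y t)) (x t)‖ ^ 2 := by
        rw [norm_smul, Real.norm_eq_abs, mul_pow, sq_abs]
      rw [h7, h8]
      ring
    -- (iv)
    have hL2 : ‖gradient (fun x' => f (x', y t)) (x t)‖ ^ 2 ≤ L ^ 2 := by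
      have := hnormgr (y t) (hyY t) (x t)
      nlinarith [norm_nonneg (gradient (fun x' => f (x', y t)) (x t))]
    -- gradient norm of the envelope
    have hgradsq : ‖gradient φM (x t)‖ ^ 2 = 4 * ℓ ^ 2 * ‖x t - xh (x t)‖ ^ 2 := by
      rw [hgradφM (x t), norm_smul, Real.norm_eq_abs, mul_pow, sq_abs]
      ring
    -- assemble
    have hi := hφMle (x (t + 1)) (xh (x t))
    have hmoro := hxh2 (x t)
    have hbpℓ := congrArg (fun r => ℓ * r) hbp
    have hiiiℓ := mul_le_mul_of_nonneg_left hiii (by positivity : (0:ℝ) ≤ 2 * ℓ * η)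
    have hL2ℓ := mul_le_mul_of_nonneg_left hL2 (by positivity : (0:ℝ) ≤ ℓ * η ^ 2)
    rw [hgradsq]
    nlinarith [hi, hmoro, hbpℓ, hiiiℓ, hL2ℓ]
  -- summing up
  have hsum : η / 2 * ∑ t ∈ Finset.range (T + 1), ‖gradient φM (x t)‖ ^ 2 ≤
      (φM (x 0) - m) + ((T : ℝ) + 1) * (2 * ℓ * η * ε + ℓ * η ^ 2 * L ^ 2) := by
    have h1 : ∀ t ∈ Finset.range (T + 1), η / 2 * ‖gradient φM (x t)‖ ^ 2
        ≤ (φM (x t) - φM (x (t + 1))) + (2 * ℓ * η * ε + ℓ * η ^ 2 * L ^ 2) :=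
      fun t _ => by linarith [key_t t]
    calc η / 2 * ∑ t ∈ Finset.range (T + 1), ‖gradient φM (x t)‖ ^ 2
        = ∑ t ∈ Finset.range (T + 1), η / 2 * ‖gradient φM (x t)‖ ^ 2 := Finset.mul_sum _ _ _
      _ ≤ ∑ t ∈ Finset.range (T + 1),
          ((φM (x t) - φM (x (t + 1))) + (2 * ℓ * η * ε + ℓ * η ^ 2 * L ^ 2)) :=
          Finset.sum_le_sum h1
      _ = (φM (x 0) - φM (x (T + 1)))
          + ((T : ℝ) + 1) * (2 * ℓ * η * ε + ℓ * η ^ 2 * L ^ 2) := by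
          rw [Finset.sum_add_distrib, Finset.sum_range_sub' (fun i => φM (x i)),
            Finset.sum_const, Finset.card_range, nsmul_eq_mul]
          push_cast
          ring
      _ ≤ (φM (x 0) - m) + ((T : ℝ) + 1) * (2 * ℓ * η * ε + ℓ * η ^ 2 * L ^ 2) := by
          have := hφMlb (x (T + 1))
          linarith
  -- final algebra
  have hS2 : ∑ t ∈ Finset.range (T + 1), ‖gradient φM (x t)‖ ^ 2
      ≤ (2 / η) * ((φM (x 0) - m) + ((T : ℝ) + 1) * (2 * ℓ * η * ε + ℓ * η ^ 2 * L ^ 2)) := by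
    have h2 := mul_le_mul_of_nonneg_left hsum (le_of_lt (by positivity : (0:ℝ) < 2 / η))
    calc ∑ t ∈ Finset.range (T + 1), ‖gradient φM (x t)‖ ^ 2
        = (2 / η) * (η / 2 * ∑ t ∈ Finset.range (T + 1), ‖gradient φM (x t)‖ ^ 2) := by
          field_simp
      _ ≤ _ := h2
  have h3 := mul_le_mul_of_nonneg_left hS2
    (le_of_lt (by positivity : (0:ℝ) < 1 / ((T : ℝ) + 1)))
  calc (1 / ((T : ℝ) + 1)) * ∑ t ∈ Finset.range (T + 1), ‖gradient φM (x t)‖ ^ 2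
      ≤ (1 / ((T : ℝ) + 1)) *
        ((2 / η) * ((φM (x 0) - m) + ((T : ℝ) + 1) * (2 * ℓ * η * ε + ℓ * η ^ 2 * L ^ 2))) := h3
    _ = 2 * ((φM (x 0) - m) + ℓ * L ^ 2 * γ ^ 2) / (γ * s) + 4 * ℓ * ε := by
        rw [hη]
        rw [show ((T : ℝ) + 1) = s ^ 2 from hs2.symm]
        field_simp
        ring
end
end
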